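/- Let K be a field of characteristic zero and let P* be a height two prime ideal of the polynomial ring K[X, Y, Z]. If the contraction P = P* ∩ K[X, Y] is a prime ideal of height two in K[X, Y], then P* is a set theoretic complete intersection, i.e., P* is the radical of an ideal generated by two polynomials; indeed P* is the extension of P to K[X, Y, Z]. -/

import Mathlib

open Polynomial

/-- The height of an ideal: the infimum of the heights (in the prime spectrum)
of the prime ideals containing it. -/
noncomputable def idealHeight {A : Type*} [CommRing A] (I : Ideal A) : ℕ∞ :=
  ⨅ (P : PrimeSpectrum A) (_ : I ≤ P.asIdeal), Order.height P

/-- An ideal `I` of a commutative ring is a set theoretic complete intersection if there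
exist `n` elements, with `n` the height of `I`, such that the radical of `I` equals the
radical of the ideal they generate. -/
def IsSTCI {A : Type*} [CommRing A] (I : Ideal A) : Prop :=
  ∃ n : ℕ, (n : ℕ∞) = idealHeight I ∧
    ∃ a : Fin n → A, I.radical = (Ideal.span (Set.range a)).radical

lemma comap_C_map_C {R : Type*} [CommRing R] (I : Ideal R) :
    (I.map (Polynomial.C : R →+* R[X])).comap (Polynomial.C : R →+* R[X]) = I := by
  ext x
  simp only [Ideal.mem_comap, Ideal.mem_map_C_iff]
  constructor
  · intro h
    simpa using h 0
  · intro h n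
    rcases eq_or_ne n 0 with rfl | hn
    · simpa using h
    · simp [Polynomial.coeff_C, hn]

lemma no_two_primes_over_bot {R : Type*} [CommRing R] [IsDomain R]
    {q p : Ideal (Polynomial R)} (hq : q.IsPrime) (hp : p.IsPrime)
    (hqp : q < p) (hq0 : q ≠ ⊥)
    (hpC : p.comap (Polynomial.C : R →+* R[X]) = ⊥) : False := by
  classical
  set F := FractionRing R
  set ψ : R[X] →+* F[X] := Polynomial.mapRingHom (algebraMap R F) with hψ
  have ψinj : Function.Injective ψ := Polynomial.map_injective _ (IsFractionRing.injective R F)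
  -- clearing denominators
  have denom : ∀ z : F[X], ∃ b : R, b ≠ 0 ∧ ∃ u : R[X],
      Polynomial.C (algebraMap R F b) * z = ψ u := by
    intro z
    obtain ⟨b, hb⟩ := IsLocalization.integerNormalization_map_to_map (M := nonZeroDivisors R) (S := F) (p := z)
    refine ⟨(b : R), nonZeroDivisors.ne_zero b.2, IsLocalization.integerNormalization (nonZeroDivisors R) z, ?_⟩
    rw [hψ]
    simp only [Polynomial.coe_mapRingHom]
    rw [hb, ← Polynomial.smul_eq_C_mul, algebraMap_smul]
  have hqC : q.comap (Polynomial.C : R →+* R[X]) = ⊥ :=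
    le_bot_iff.mp (hpC ▸ Ideal.comap_mono hqp.le)
  -- comap of the extension recovers a prime lying over ⊥
  have comap_back : ∀ (I : Ideal R[X]), I.IsPrime →
      I.comap (Polynomial.C : R →+* R[X]) = ⊥ → (I.map ψ).comap ψ = I := by
    intro I hI hIC
    refine le_antisymm ?_ Ideal.le_comap_map
    intro x hx
    rw [Ideal.mem_comap] at hx
    have key : ∀ z, z ∈ I.map ψ → ∃ b : R, b ≠ 0 ∧ ∃ w ∈ I,
        Polynomial.C (algebraMap R F b) * z = ψ w := by
      intro z hz
      refine Submodule.span_induction ?_ ?_ ?_ ?_ hz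
      · rintro _ ⟨w, hw, rfl⟩
        exact ⟨1, one_ne_zero, w, hw, by simp⟩
      · exact ⟨1, one_ne_zero, 0, I.zero_mem, by simp⟩
      · rintro z₁ z₂ - - ⟨b₁, hb₁, w₁, hw₁, he₁⟩ ⟨b₂, hb₂, w₂, hw₂, he₂⟩
        refine ⟨b₁ * b₂, mul_ne_zero hb₁ hb₂,
          Polynomial.C b₂ * w₁ + Polynomial.C b₁ * w₂,
          I.add_mem (I.mul_mem_left _ hw₁) (I.mul_mem_left _ hw₂), ?_⟩
        rw [hψ] at he₁ he₂ ⊢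
        simp only [Polynomial.coe_mapRingHom] at he₁ he₂ ⊢
        simp only [Polynomial.map_add, Polynomial.map_mul, Polynomial.map_C, map_mul,
          Polynomial.C_mul]
        linear_combination Polynomial.C ((algebraMap R F) b₂) * he₁ +
          Polynomial.C ((algebraMap R F) b₁) * he₂
      · rintro c z - ⟨b, hb, w, hw, he⟩
        obtain ⟨b', hb', u, hu⟩ := denom c
        refine ⟨b' * b, mul_ne_zero hb' hb, u * w, I.mul_mem_left _ hw, ?_⟩
        rw [smul_eq_mul, map_mul, Polynomial.C_mul, map_mul]
        calc Polynomial.C (algebraMap R F b') * Polynomial.C (algebraMap R F b) * (c * z)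
            = (Polynomial.C (algebraMap R F b') * c) *
              (Polynomial.C (algebraMap R F b) * z) := by ring
          _ = ψ u * ψ w := by rw [hu, he]
    obtain ⟨b, hb, w, hw, he⟩ := key _ hx
    have hCb : Polynomial.C b * x ∈ I := by
      have : ψ (Polynomial.C b * x) = ψ w := by
        rw [map_mul, hψ]; simp only [Polynomial.coe_mapRingHom, Polynomial.map_C]
        rw [hψ] at he; simpa using he
      rwa [ψinj this]
    rcases hI.mem_or_mem hCb with h | h
    · exact absurd (show b ∈ I.comap (Polynomial.C : R →+* R[X]) from h) (by
        rw [hIC]; simpa using hb)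
    · exact h
  -- the extension of such a prime is prime
  have ext_prime : ∀ (I : Ideal R[X]), I.IsPrime →
      I.comap (Polynomial.C : R →+* R[X]) = ⊥ → (I.map ψ).IsPrime := by
    intro I hI hIC
    constructor
    · intro htop
      have : (1 : R[X]) ∈ (I.map ψ).comap ψ := by rw [Ideal.mem_comap, htop]; trivial
      rw [comap_back I hI hIC] at this
      exact hI.ne_top ((Ideal.eq_top_iff_one I).mpr this)
    · intro u v huv
      obtain ⟨b, hb, u', hu'⟩ := denom u
      obtain ⟨c, hc, v', hv'⟩ := denom v
      have hunit : ∀ a : R, a ≠ 0 → IsUnit (Polynomial.C (algebraMap R F a)) := by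
        intro a ha
        exact Polynomial.isUnit_C.mpr ((IsFractionRing.to_map_ne_zero_of_mem_nonZeroDivisors
          (mem_nonZeroDivisors_of_ne_zero ha)).isUnit)
      have hmem : u' * v' ∈ I := by
        have : ψ (u' * v') ∈ I.map ψ := by
          rw [map_mul, ← hu', ← hv']
          have : Polynomial.C (algebraMap R F b) * u * (Polynomial.C (algebraMap R F c) * v)
              = Polynomial.C (algebraMap R F b) * Polynomial.C (algebraMap R F c) * (u * v) := by
            ring
          rw [this]
          exact (I.map ψ).mul_mem_left _ huv
        rwa [← Ideal.mem_comap, comap_back I hI hIC] at this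
      rcases hI.mem_or_mem hmem with h | h
      · left
        have : ψ u' ∈ I.map ψ := Ideal.mem_map_of_mem _ h
        rw [← hu'] at this
        exact (Ideal.unit_mul_mem_iff_mem _ (hunit b hb)).mp this
      · right
        have : ψ v' ∈ I.map ψ := Ideal.mem_map_of_mem _ h
        rw [← hv'] at this
        exact (Ideal.unit_mul_mem_iff_mem _ (hunit c hc)).mp this
  have hqe : (q.map ψ).IsPrime := ext_prime q hq hqC
  have hpe : (p.map ψ).IsPrime := ext_prime p hp hpC
  have hqe0 : q.map ψ ≠ ⊥ := by
    obtain ⟨x, hxq, hx0⟩ := Submodule.exists_mem_ne_zero_of_ne_bot hq0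
    intro h
    have : ψ x ∈ q.map ψ := Ideal.mem_map_of_mem _ hxq
    rw [h, Ideal.mem_bot] at this
    exact hx0 (ψinj (by simpa using this))
  have hne : q.map ψ ≠ p.map ψ := by
    intro h
    have := congrArg (Ideal.comap ψ) h
    rw [comap_back q hq hqC, comap_back p hp hpC] at this
    exact hqp.ne this
  haveI := hqe
  have hmax : (q.map ψ).IsMaximal := IsPrime.to_maximal_ideal hqe0
  exact hne (hmax.eq_of_le hpe.ne_top (Ideal.map_mono hqp.le))

lemma prime_two_gen {R : Type*} [CommRing R] {p : Ideal (Polynomial R)} (hp : p.IsPrime)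
    {f : R} (hQ : p.comap (Polynomial.C : R →+* R[X]) = Ideal.span {f})
    (hmax : (Ideal.span {f} : Ideal R).IsMaximal) :
    ∃ g, p = Ideal.span {Polynomial.C f, g} := by
  classical
  set Q : Ideal R := Ideal.span {f} with hQdef
  letI : Field (R ⧸ Q) := Ideal.Quotient.field Q
  set π : R[X] →+* (R ⧸ Q)[X] := Polynomial.mapRingHom (Ideal.Quotient.mk Q) with hπ
  have hsurj : Function.Surjective π := Polynomial.map_surjective _ Ideal.Quotient.mk_surjective
  have hker : RingHom.ker π = Q.map (Polynomial.C : R →+* R[X]) := by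
    rw [hπ, Polynomial.ker_mapRingHom, Ideal.mk_ker]
  have hkerle : RingHom.ker π ≤ p := by
    rw [hker, ← hQ]
    exact Ideal.map_comap_le
  haveI := hp
  haveI hp' : (p.map π).IsPrime := Ideal.map_isPrime_of_surjective hsurj hkerle
  obtain ⟨g', hg'⟩ := (IsPrincipalIdealRing.principal (p.map π)).principal
  obtain ⟨g, hg⟩ := hsurj g'
  have hcomap : (p.map π).comap π = p := by
    rw [Ideal.comap_map_of_surjective π hsurj, ← RingHom.ker_eq_comap_bot,
      sup_eq_left.mpr hkerle]
  refine ⟨g, le_antisymm ?_ ?_⟩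
  · intro x hx
    have hx' : π x ∈ p.map π := Ideal.mem_map_of_mem _ hx
    rw [hg'] at hx'
    obtain ⟨c', hc'⟩ := Ideal.mem_span_singleton'.mp hx'
    obtain ⟨c, hc⟩ := hsurj c'
    have hsub : x - c * g ∈ RingHom.ker π := by
      rw [RingHom.mem_ker, map_sub, map_mul, hc, hg, hc', sub_self]
    have hsub' : x - c * g ∈ Ideal.span ({Polynomial.C f, g} : Set R[X]) := by
      have : RingHom.ker π = Ideal.span {Polynomial.C f} := by
        rw [hker, hQdef, Ideal.map_span, Set.image_singleton]
      rw [this] at hsub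
      exact Ideal.span_mono (Set.singleton_subset_iff.mpr (Set.mem_insert _ _)) hsub
    have : x = (x - c * g) + c * g := by ring
    rw [this]
    exact Ideal.add_mem _ hsub'
      (Ideal.mul_mem_left _ _ (Ideal.subset_span (Set.mem_insert_of_mem _ rfl)))
  · rw [Ideal.span_le]
    intro y hy
    simp only [Set.mem_insert_iff, Set.mem_singleton_iff] at hy
    rcases hy with h | h
    · rw [h]
      have hf : f ∈ p.comap (Polynomial.C : R →+* R[X]) := by
        rw [hQ]; exact Ideal.subset_span rfl
      exact hf
    · rw [h]
      have hgp : π g ∈ p.map π := by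
        rw [hg, hg']; exact Ideal.subset_span rfl
      have := (Ideal.mem_comap (f := π)).mpr hgp
      rwa [hcomap] at this

lemma idealHeight_eq_height {A : Type*} [CommRing A] {I : Ideal A} (hI : I.IsPrime) :
    idealHeight I = Order.height (⟨I, hI⟩ : PrimeSpectrum A) := by
  unfold idealHeight
  refine le_antisymm ?_ ?_
  · exact iInf₂_le (⟨I, hI⟩ : PrimeSpectrum A) le_rfl
  · refine le_iInf₂ fun J hJ => Order.height_mono ?_
    exact (PrimeSpectrum.asIdeal_le_asIdeal _ _).mp hJ

lemma strictMono_mapC {R : Type*} [CommRing R] :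
    StrictMono (fun q : PrimeSpectrum R =>
      (⟨q.asIdeal.map (Polynomial.C : R →+* R[X]),
        (by haveI := q.2; exact Ideal.isPrime_map_C_of_isPrime)⟩ : PrimeSpectrum R[X])) := by
  intro a b hab
  rw [← PrimeSpectrum.asIdeal_lt_asIdeal] at hab ⊢
  refine lt_of_le_of_ne (Ideal.map_mono hab.le) fun h => hab.ne ?_
  have := congrArg (Ideal.comap (Polynomial.C : R →+* R[X])) h
  rwa [comap_C_map_C, comap_C_map_C] at this

lemma strictMono_spec_equiv {R S : Type*} [CommRing R] [CommRing S] (e : R ≃+* S) :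
    StrictMono (fun q : PrimeSpectrum R =>
      (⟨q.asIdeal.comap (e.symm : S →+* R),
        Ideal.IsPrime.comap _ (hK := q.2)⟩ : PrimeSpectrum S)) := by
  have hinv : ∀ I : Ideal R, (I.comap (e.symm : S →+* R)).comap (e : R →+* S) = I := by
    intro I
    ext x
    simp [Ideal.mem_comap]
  intro a b hab
  rw [← PrimeSpectrum.asIdeal_lt_asIdeal] at hab ⊢
  refine lt_of_le_of_ne (Ideal.comap_mono hab.le) fun h => hab.ne ?_
  have := congrArg (Ideal.comap (e : R →+* S)) h
  rwa [hinv, hinv] at this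

lemma range_fin_two {α : Type*} (a b : α) : Set.range ![a, b] = {a, b} := by
  ext z
  constructor
  · rintro ⟨i, rfl⟩
    fin_cases i <;> simp
  · rintro (rfl | rfl)
    exacts [⟨0, rfl⟩, ⟨1, rfl⟩]

/-- Let `K` be a field of characteristic zero and `P*` a height two prime of
`K[X,Y,Z] = (K[X,Y])[Z]`. If its contraction `P` to `K[X,Y]` has height two, then `P*`
is a set theoretic complete intersection; indeed `P*` is the extension of `P`. -/
theorem stmt_9 (K : Type*) [Field K] [CharZero K]
    (Pstar : Ideal (Polynomial (MvPolynomial (Fin 2) K))) (hPstar : Pstar.IsPrime)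
    (hht : idealHeight Pstar = 2)
    (hht' : idealHeight (Pstar.comap
      (Polynomial.C : MvPolynomial (Fin 2) K →+* Polynomial (MvPolynomial (Fin 2) K))) = 2) :
    IsSTCI Pstar ∧
      Pstar = (Pstar.comap
        (Polynomial.C : MvPolynomial (Fin 2) K →+* Polynomial (MvPolynomial (Fin 2) K))).map
          (Polynomial.C : MvPolynomial (Fin 2) K →+* Polynomial (MvPolynomial (Fin 2) K)) := by
  classical
  haveI := hPstar
  set P : Ideal (MvPolynomial (Fin 2) K) := Pstar.comap
    (Polynomial.C : MvPolynomial (Fin 2) K →+* Polynomial (MvPolynomial (Fin 2) K)) with hPdef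
  haveI hP : P.IsPrime := Ideal.IsPrime.comap _
  have hhtP : Order.height (⟨P, hP⟩ : PrimeSpectrum (MvPolynomial (Fin 2) K)) = (2 : ℕ) := by
    rw [← idealHeight_eq_height hP, hht']
    norm_num
  have hhtPstar : Order.height (⟨Pstar, hPstar⟩ :
      PrimeSpectrum (Polynomial (MvPolynomial (Fin 2) K))) = (2 : ℕ∞) := by
    rw [← idealHeight_eq_height hPstar, hht]
  obtain ⟨r, hrlast, hrlen⟩ := Order.exists_series_of_height_eq_coe _ hhtP
  -- Step 1 : Pstar is the extension of P
  have hext : P.map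
      (Polynomial.C : MvPolynomial (Fin 2) K →+* Polynomial (MvPolynomial (Fin 2) K)) = Pstar := by
    have hle : P.map
        (Polynomial.C : MvPolynomial (Fin 2) K →+* Polynomial (MvPolynomial (Fin 2) K))
        ≤ Pstar := Ideal.map_comap_le
    by_contra hne
    have hlt : (⟨P.map (Polynomial.C :
        MvPolynomial (Fin 2) K →+* Polynomial (MvPolynomial (Fin 2) K)),
        (by haveI := hP; exact Ideal.isPrime_map_C_of_isPrime)⟩ :
        PrimeSpectrum (Polynomial (MvPolynomial (Fin 2) K))) < ⟨Pstar, hPstar⟩ := by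
      rw [← PrimeSpectrum.asIdeal_lt_asIdeal]
      exact lt_of_le_of_ne hle hne
    have hlast' : (r.map _ strictMono_mapC).last =
        ⟨P.map (Polynomial.C : MvPolynomial (Fin 2) K →+* Polynomial (MvPolynomial (Fin 2) K)),
          (by haveI := hP; exact Ideal.isPrime_map_C_of_isPrime)⟩ := by
      rw [LTSeries.last_map, hrlast]
    have h3 := Order.length_le_height_last
      (p := ((r.map _ strictMono_mapC).snoc ⟨Pstar, hPstar⟩ (hlast' ▸ hlt)))
    rw [RelSeries.last_snoc, hhtPstar] at h3
    have hlen : ((r.map _ strictMono_mapC).snoc ⟨Pstar, hPstar⟩ (hlast' ▸ hlt)).length = 3 := by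
      simp [RelSeries.snoc_length, hrlen]
    rw [hlen] at h3
    norm_num at h3
  -- Step 2 : transport P to (K[X])[Y]
  let e₃ := MvPolynomial.isEmptyAlgEquiv K (Fin 0)
  let e₂ := (MvPolynomial.finSuccEquiv K 0).trans (Polynomial.mapAlgEquiv e₃)
  let e₁ := (MvPolynomial.finSuccEquiv K 1).trans (Polynomial.mapAlgEquiv e₂)
  let e : MvPolynomial (Fin 2) K ≃+* Polynomial (Polynomial K) := e₁.toRingEquiv
  set P₂ : Ideal (Polynomial (Polynomial K)) :=
    P.comap (e.symm : Polynomial (Polynomial K) →+* MvPolynomial (Fin 2) K) with hP₂def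
  haveI hP₂ : P₂.IsPrime := Ideal.IsPrime.comap _
  have hhtP₂ : (2 : ℕ) ≤ Order.height (⟨P₂, hP₂⟩ : PrimeSpectrum (Polynomial (Polynomial K))) := by
    have := Order.height_le_height_apply_of_strictMono _ (strictMono_spec_equiv e) ⟨P, hP⟩
    rw [hhtP] at this
    exact this
  obtain ⟨r2, hr2last, hr2len⟩ := Order.exists_series_of_le_height _ hhtP₂
  set Q : Ideal (Polynomial K) :=
    P₂.comap (Polynomial.C : Polynomial K →+* Polynomial (Polynomial K)) with hQdef
  haveI hQp : Q.IsPrime := Ideal.IsPrime.comap _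
  have hQ0 : Q ≠ ⊥ := by
    intro hbot
    have h01 : r2 ⟨0, by omega⟩ < r2 ⟨1, by omega⟩ := r2.strictMono (by simp [Fin.lt_def])
    have h12 : r2 ⟨1, by omega⟩ < r2.last := by
      have : r2.last = r2 ⟨r2.length, by omega⟩ := rfl
      rw [this]
      exact r2.strictMono (by simp [Fin.lt_def, hr2len])
    rw [hr2last] at h12
    refine no_two_primes_over_bot (r2 ⟨1, by omega⟩).2 hP₂ ?_ ?_ hbot
    · rw [← PrimeSpectrum.asIdeal_lt_asIdeal] at h12
      exact h12
    · intro hb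
      rw [← PrimeSpectrum.asIdeal_lt_asIdeal, hb] at h01
      exact not_lt_bot h01
  obtain ⟨f, hf⟩ := (IsPrincipalIdealRing.principal Q).principal
  rw [Ideal.submodule_span_eq] at hf
  haveI : (Ideal.span ({f} : Set (Polynomial K))).IsPrime := hf ▸ hQp
  have hmax : (Ideal.span ({f} : Set (Polynomial K))).IsMaximal :=
    IsPrime.to_maximal_ideal (hf ▸ hQ0)
  obtain ⟨g, hPg⟩ := prime_two_gen hP₂ (hQdef ▸ hf) hmax
  -- pull the generators back
  have hmapP₂ : P₂.map (e.symm : Polynomial (Polynomial K) →+* MvPolynomial (Fin 2) K) = P := by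
    refine le_antisymm Ideal.map_comap_le fun x hx => ?_
    have hx' : x = e.symm (e x) := (e.symm_apply_apply x).symm
    rw [hx']
    refine Ideal.mem_map_of_mem _ (show e x ∈ P₂ from ?_)
    rw [hP₂def, Ideal.mem_comap]
    simpa using hx
  have hPspan : P = Ideal.span
      {(e.symm : Polynomial (Polynomial K) →+* MvPolynomial (Fin 2) K) (Polynomial.C f),
       (e.symm : Polynomial (Polynomial K) →+* MvPolynomial (Fin 2) K) g} := by
    rw [← hmapP₂, hPg, Ideal.map_span, Set.image_insert_eq, Set.image_singleton]
  have hPstar_span : Pstar = Ideal.span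
      {Polynomial.C ((e.symm : Polynomial (Polynomial K) →+* MvPolynomial (Fin 2) K)
        (Polynomial.C f)),
       Polynomial.C ((e.symm : Polynomial (Polynomial K) →+* MvPolynomial (Fin 2) K) g)} := by
    rw [← hext, hPspan, Ideal.map_span, Set.image_insert_eq, Set.image_singleton]
  refine ⟨⟨2, ?_,
    ![Polynomial.C ((e.symm : Polynomial (Polynomial K) →+* MvPolynomial (Fin 2) K)
        (Polynomial.C f)),
      Polynomial.C ((e.symm : Polynomial (Polynomial K) →+* MvPolynomial (Fin 2) K) g)], ?_⟩,
    hext.symm⟩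
  · rw [hht]
    norm_num
  · rw [range_fin_two, ← hPstar_span]
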